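/- Let p be a prime number and let a be a real number that is transcendental over ℚ. Then the polynomial T_p(x) − a, regarded as a polynomial with coefficients in the intermediate field ℚ(a) ⊆ ℝ generated by a over ℚ, is irreducible over ℚ(a). -/

import Mathlib

open Polynomial IntermediateField

namespace ChebAux

open Polynomial.Chebyshev

lemma T_degree_leading (n : ℕ) :
    (Chebyshev.T ℚ n).degree = n ∧ (Chebyshev.T ℚ n).leadingCoeff = 2 ^ (n - 1) := by
  induction n using Nat.twoStepInduction with
  | zero => simp [T_zero]
  | one => simp [T_one]
  | more n h1 h2 =>
      have hcast : ((n + 2 : ℕ) : ℤ) = (n : ℤ) + 2 := by push_cast; ring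
      have hcast1 : ((n + 1 : ℕ) : ℤ) = (n : ℤ) + 1 := by push_cast; ring
      rw [hcast, T_add_two ℚ n]
      have h2' := h2
      rw [hcast1] at h2'
      have h2X : (2 * X : ℚ[X]) = C 2 * X := by
        rw [map_ofNat]
      have hdA : (2 * X * Chebyshev.T ℚ ((n : ℤ) + 1)).degree = ((n + 2 : ℕ) : WithBot ℕ) := by
        rw [h2X, degree_mul, degree_C_mul_X (by norm_num : (2:ℚ) ≠ 0), h2'.1]
        push_cast
        ring
      have hlA : (2 * X * Chebyshev.T ℚ ((n : ℤ) + 1)).leadingCoeff = 2 ^ (n + 1) := by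
        rw [h2X, leadingCoeff_mul, h2'.2, leadingCoeff_mul, leadingCoeff_C, leadingCoeff_X]
        norm_num
        ring
      have hlt : (Chebyshev.T ℚ (n : ℤ)).degree < (2 * X * Chebyshev.T ℚ ((n : ℤ) + 1)).degree := by
        rw [hdA, h1.1]
        exact_mod_cast WithBot.coe_lt_coe.mpr (by omega)
      constructor
      · rw [degree_sub_eq_left_of_degree_lt hlt, hdA]
      · rw [leadingCoeff_sub_of_degree_lt hlt, hlA]
        norm_num

lemma map_eq_aevalX {F A : Type*} [CommSemiring F] [CommSemiring A] [Algebra F A] (w : F[X]) :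
    w.map (algebraMap F A) = Polynomial.aeval (Polynomial.X : A[X]) w := by
  induction w using Polynomial.induction_on' with
  | add p q hp hq => simp [hp, hq]
  | monomial n r =>
      rw [Polynomial.map_monomial, Polynomial.aeval_monomial, Polynomial.algebraMap_apply,
        ← Polynomial.C_mul_X_pow_eq_monomial]

/-- For a field `F`, a transcendental element `x` of a field extension `E/F`, and a
polynomial `w` over `F` of positive degree, `w - x` is irreducible over `F⟮x⟯`. -/
theorem irreducible_map_sub_C_gen {F E : Type*} [Field F] [Field E] [Algebra F E]
    (x : E) (hxt : Transcendental F x) (w : F[X]) (hw : 0 < w.degree) :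
    Irreducible (w.map (algebraMap F F⟮x⟯) - Polynomial.C (AdjoinSimple.gen F x)) := by
  classical
  have hx : AlgebraicIndependent F (fun _ : Unit => x) :=
    algebraicIndependent_unique_type_iff.mpr hxt
  set R := MvPolynomial Unit F with hR
  set K := FractionRing R with hK
  have hrange : (Set.range fun _ : Unit => x) = {x} := Set.range_const
  have hadj : IntermediateField.adjoin F (Set.range fun _ : Unit => x) = F⟮x⟯ := by rw [hrange]
  let e : K ≃ₐ[F] F⟮x⟯ := hx.aevalEquivField.trans (IntermediateField.equivOfEq hadj)
  set t0 : K := algebraMap R K (MvPolynomial.X ()) with ht0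
  have het : e t0 = AdjoinSimple.gen F x := by
    apply Subtype.ext
    show ((hx.aevalEquivField t0 : E)) = x
    rw [ht0, hx.aevalEquivField_algebraMap_apply_coe, MvPolynomial.aeval_X]
  have hw0 : w ≠ 0 := fun h => by simp [h] at hw
  have hinj : Function.Injective (algebraMap F R) := (algebraMap F R).injective
  set wR : R[X] := w.map (algebraMap F R) with hwR
  have hwRdeg : wR.degree = w.degree := degree_map_eq_of_injective hinj _
  have hwRlead : wR.leadingCoeff = algebraMap F R w.leadingCoeff := leadingCoeff_map_of_injective hinj _
  set q : R[X] := wR - Polynomial.C (MvPolynomial.X ()) with hq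
  have hlt : (Polynomial.C (MvPolynomial.X () : R)).degree < wR.degree := by
    rw [hwRdeg]; exact lt_of_le_of_lt degree_C_le hw
  have hqlead : q.leadingCoeff = algebraMap F R w.leadingCoeff := by
    rw [hq, leadingCoeff_sub_of_degree_lt hlt, hwRlead]
  set u : F := w.leadingCoeff⁻¹ with hu
  have hlc0 : w.leadingCoeff ≠ 0 := leadingCoeff_ne_zero.mpr hw0
  have hune : u ≠ 0 := inv_ne_zero hlc0
  set qm : R[X] := Polynomial.C (algebraMap F R u) * q with hqm
  have hqmMonic : qm.Monic := by
    unfold Polynomial.Monic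
    rw [hqm, leadingCoeff_mul, leadingCoeff_C, hqlead, ← map_mul, hu,
      inv_mul_cancel₀ hlc0, map_one]
  -- irreducibility of q in R[X] via the variable-swapping isomorphism
  let F1 : R[X] ≃ₐ[F] MvPolynomial (Option Unit) F := (MvPolynomial.optionEquivLeft F Unit).symm
  let F2 := MvPolynomial.renameEquiv F (Equiv.swap (none : Option Unit) (some ()))
  let F3 := MvPolynomial.optionEquivLeft F Unit
  let F4 := Polynomial.mapAlgEquiv (MvPolynomial.pUnitAlgEquiv F)
  let Φ : R[X] ≃ₐ[F] Polynomial (Polynomial F) := F1.trans (F2.trans (F3.trans F4))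
  have hF1X : F1 Polynomial.X = MvPolynomial.X none := by
    rw [AlgEquiv.symm_apply_eq, MvPolynomial.optionEquivLeft_X_none]
  have hF1C : F1 (Polynomial.C (MvPolynomial.X ())) = MvPolynomial.X (some ()) := by
    rw [AlgEquiv.symm_apply_eq, MvPolynomial.optionEquivLeft_X_some]
  have hFX : Φ Polynomial.X = Polynomial.C Polynomial.X := by
    show F4 (F3 (F2 (F1 Polynomial.X))) = _
    rw [hF1X]
    show F4 (F3 (MvPolynomial.rename _ (MvPolynomial.X none))) = _
    rw [MvPolynomial.rename_X, Equiv.swap_apply_left, MvPolynomial.optionEquivLeft_X_some]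
    show Polynomial.map _ _ = _
    rw [Polynomial.map_C]
    simp
  have hFC : Φ (Polynomial.C (MvPolynomial.X ())) = Polynomial.X := by
    show F4 (F3 (F2 (F1 (Polynomial.C (MvPolynomial.X ()))))) = _
    rw [hF1C]
    show F4 (F3 (MvPolynomial.rename _ (MvPolynomial.X (some ())))) = _
    rw [MvPolynomial.rename_X, Equiv.swap_apply_right, MvPolynomial.optionEquivLeft_X_none]
    show Polynomial.map _ _ = _
    rw [Polynomial.map_X]
  have hFq : Φ q = Polynomial.C w - Polynomial.X := by
    rw [hq, map_sub, hFC, hwR, map_eq_aevalX, ← Polynomial.aeval_algHom_apply Φ Polynomial.X w]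
    congr 1
    rw [hFX]
    have h := Polynomial.aeval_algHom_apply (Polynomial.CAlgHom (R := F) (A := F[X]))
        Polynomial.X w
    rw [Polynomial.aeval_X_left_apply] at h
    exact h
  have hFqIrr : Irreducible (Φ q) := by
    rw [hFq]
    have hassoc : Associated (Polynomial.X - Polynomial.C w)
        (Polynomial.C w - Polynomial.X) := ⟨-1, by simp⟩
    exact hassoc.irreducible (Polynomial.irreducible_X_sub_C _)
  have hqIrr : Irreducible q := (MulEquiv.irreducible_iff Φ).mp hFqIrr
  have huR : IsUnit (Polynomial.C (algebraMap F R u)) :=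
    Polynomial.isUnit_C.mpr ((algebraMap F R).isUnit_map (isUnit_iff_ne_zero.mpr hune))
  have hqmIrr : Irreducible qm := by
    have hassoc : Associated q qm := ⟨huR.unit, by rw [IsUnit.unit_spec, hqm]; ring⟩
    exact hassoc.irreducible hqIrr
  -- Gauss's lemma: pass to the fraction field K
  haveI : IsIntegrallyClosed R := UniqueFactorizationMonoid.instIsIntegrallyClosed
  have hGauss : Irreducible (qm.map (algebraMap R K)) :=
    (hqmMonic.irreducible_iff_irreducible_map_fraction_map (K := K)).mp hqmIrr
  have hmapqm : qm.map (algebraMap R K)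
      = Polynomial.C (algebraMap F K u) * (w.map (algebraMap F K) - Polynomial.C t0) := by
    rw [hqm, Polynomial.map_mul, Polynomial.map_C, hq, Polynomial.map_sub, Polynomial.map_C,
      ht0, hwR, Polynomial.map_map, ← IsScalarTower.algebraMap_eq,
      ← IsScalarTower.algebraMap_apply]
  have huK : IsUnit (Polynomial.C (algebraMap F K u)) :=
    Polynomial.isUnit_C.mpr ((algebraMap F K).isUnit_map (isUnit_iff_ne_zero.mpr hune))
  have hKIrr : Irreducible (w.map (algebraMap F K) - Polynomial.C t0) := by
    have hassoc : Associated (w.map (algebraMap F K) - Polynomial.C t0)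
        (qm.map (algebraMap R K)) := ⟨huK.unit, by rw [IsUnit.unit_spec, hmapqm]; ring⟩
    exact hassoc.symm.irreducible hGauss
  -- transport irreducibility along e
  have hmapeq : (w.map (algebraMap F K) - Polynomial.C t0).map (e : K →+* F⟮x⟯)
      = w.map (algebraMap F F⟮x⟯) - Polynomial.C (AdjoinSimple.gen F x) := by
    have h2 : ((e : K →+* ↥F⟮x⟯)) t0 = AdjoinSimple.gen F x := het
    rw [Polynomial.map_sub, Polynomial.map_C, Polynomial.map_map, h2,
      ← e.toAlgHom.comp_algebraMap]
    rfl
  rw [← hmapeq, show (w.map (algebraMap F K) - Polynomial.C t0).map (e : K →+* F⟮x⟯)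
      = Polynomial.mapEquiv e.toRingEquiv (w.map (algebraMap F K) - Polynomial.C t0) from rfl]
  exact (MulEquiv.irreducible_iff _).mpr hKIrr

end ChebAux

/-- For a prime `p` and a real number `a` transcendental over `ℚ`,
the polynomial `T_p(x) - a`, with coefficients in the intermediate field `ℚ⟮a⟯ ⊆ ℝ`,
is irreducible over `ℚ⟮a⟯`. -/
theorem chebyshev_sub_transcendental_irreducible (p : ℕ) (hp : p.Prime)
    (a : ℝ) (ha : Transcendental ℚ a) :
    Irreducible (Chebyshev.T ℚ⟮a⟯ p - C (AdjoinSimple.gen ℚ a)) := by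
  have hdeg : 0 < (Chebyshev.T ℚ (p : ℤ)).degree := by
    rw [(ChebAux.T_degree_leading p).1]
    exact_mod_cast WithBot.coe_lt_coe.mpr hp.pos
  have h := ChebAux.irreducible_map_sub_C_gen a ha (Chebyshev.T ℚ (p : ℤ)) hdeg
  rwa [Polynomial.Chebyshev.map_T] at h
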